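/- With H, A, B, C as above, define Z_i = det [[A_i, A_{n+1}, A_{n+2}], [B_i, B_{n+1}, B_{n+2}], [C_i, C_{n+1}, C_{n+2}]] for 1 ≤ i ≤ n. Then the vector 𝐙 = (Z_1, …, Z_n)ᵗ satisfies H𝐙 = -Z_{n+3} E_n, where Z_{n+3} = det [[A_{n+3}, A_{n+1}, A_{n+2}], [B_{n+3}, B_{n+1}, B_{n+2}], [C_{n+3}, C_{n+1}, C_{n+2}]]. -/

import Mathlib

open Matrix

/-- The `n × n` heptadiagonal matrix of (1.1), with 1-indexed diagonal sequences
`a, b, c, d, e, f, g : ℤ → ℝ` (entry `H i j` with `i, j : Fin n` corresponds to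
row `i+1`, column `j+1` in the paper's indexing). -/
def heptaMatrix (n : ℕ) (a b c d e f g : ℤ → ℝ) : Matrix (Fin n) (Fin n) ℝ :=
  fun i j =>
    if ((j : ℤ) + 1) = ((i : ℤ) + 1) - 3 then a ((i : ℤ) + 1)
    else if ((j : ℤ) + 1) = ((i : ℤ) + 1) - 2 then b ((i : ℤ) + 1)
    else if ((j : ℤ) + 1) = ((i : ℤ) + 1) - 1 then c ((i : ℤ) + 1)
    else if ((j : ℤ) + 1) = ((i : ℤ) + 1) then d ((i : ℤ) + 1)
    else if ((j : ℤ) + 1) = ((i : ℤ) + 1) + 1 then e ((i : ℤ) + 1)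
    else if ((j : ℤ) + 1) = ((i : ℤ) + 1) + 2 then f ((i : ℤ) + 1)
    else if ((j : ℤ) + 1) = ((i : ℤ) + 1) + 3 then g ((i : ℤ) + 1)
    else 0

/-- `W : ℤ → ℝ` satisfies the seven-term recurrence
`aᵢ W_{i-3} + bᵢ W_{i-2} + cᵢ W_{i-1} + dᵢ Wᵢ + eᵢ W_{i+1} + fᵢ W_{i+2} + gᵢ W_{i+3} = 0`
for `1 ≤ i ≤ n`, with out-of-range terms (index `≤ 0`) treated as zero. -/
def SevenTermRec (n : ℕ) (a b c d e f g : ℤ → ℝ) (W : ℤ → ℝ) : Prop :=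
  (∀ j : ℤ, j ≤ 0 → W j = 0) ∧
  (∀ i : ℤ, 1 ≤ i → i ≤ (n : ℤ) →
    a i * W (i - 3) + b i * W (i - 2) + c i * W (i - 1) + d i * W i +
      e i * W (i + 1) + f i * W (i + 2) + g i * W (i + 3) = 0)

/-- The `k`-th standard basis vector of `ℝⁿ` (1-indexed `k`). -/
def stdBasis (n : ℕ) (k : ℤ) : Fin n → ℝ := fun i => if ((i : ℤ) + 1) = k then 1 else 0

/-- The 3×3 determinant with rows formed from `A`, `B`, `C` at indices `p`, `q`, `r`. -/
def det3 (A B C : ℤ → ℝ) (p q r : ℤ) : ℝ :=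
  Matrix.det !![A p, A q, A r; B p, B q, B r; C p, C q, C r]

/-- The `k`-th column (1-indexed, `1 ≤ k ≤ n`) of a matrix, as a vector; `0` out of range. -/
def matCol (n : ℕ) (M : Matrix (Fin n) (Fin n) ℝ) (k : ℤ) : Fin n → ℝ :=
  fun i => if hk : 1 ≤ k ∧ k ≤ (n : ℤ) then M i ⟨(k - 1).toNat, by omega⟩ else 0

def bandG (a b c d e f g : ℤ → ℝ) (m : ℤ) : ℤ → ℝ := fun k =>
  if k = m - 3 then a m
  else if k = m - 2 then b m
  else if k = m - 1 then c m
  else if k = m then d m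
  else if k = m + 1 then e m
  else if k = m + 2 then f m
  else if k = m + 3 then g m
  else 0

lemma bandG_zero (a b c d e f g : ℤ → ℝ) (m k : ℤ) (hk : k < m - 3 ∨ m + 3 < k) :
    bandG a b c d e f g m k = 0 := by
  unfold bandG; split_ifs <;> first | rfl | omega

lemma hepta_eq_bandG (n : ℕ) (a b c d e f g : ℤ → ℝ) (i j : Fin n) :
    heptaMatrix n a b c d e f g i j = bandG a b c d e f g ((i:ℤ)+1) ((j:ℤ)+1) := rfl

lemma hepta_sum_Icc7 (m : ℤ) (F : ℤ → ℝ) :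
    ∑ k ∈ Finset.Icc (m-3) (m+3), F k
      = F (m-3) + F (m-2) + F (m-1) + F m + F (m+1) + F (m+2) + F (m+3) := by
  have h : Finset.Icc (m-3) (m+3) = ({m-3, m-2, m-1, m, m+1, m+2, m+3} : Finset ℤ) := by
    ext x; simp; omega
  rw [h, Finset.sum_insert (by simp only [Finset.mem_insert, Finset.mem_singleton]; omega),
    Finset.sum_insert (by simp only [Finset.mem_insert, Finset.mem_singleton]; omega),
    Finset.sum_insert (by simp only [Finset.mem_insert, Finset.mem_singleton]; omega),
    Finset.sum_insert (by simp only [Finset.mem_insert, Finset.mem_singleton]; omega),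
    Finset.sum_insert (by simp only [Finset.mem_insert, Finset.mem_singleton]; omega),
    Finset.sum_insert (by simp only [Finset.mem_singleton]; omega),
    Finset.sum_singleton]
  ring

lemma sum_fin_eq_sum_Icc (n : ℕ) (F : ℤ → ℝ) :
    ∑ j : Fin n, F ((j:ℤ)+1) = ∑ k ∈ Finset.Icc (1:ℤ) (n:ℤ), F k := by
  rw [Fin.sum_univ_eq_sum_range (fun j : ℕ => F ((j:ℤ)+1)) n]
  rw [show Finset.Icc (1:ℤ) (n:ℤ)
      = (Finset.range n).map ⟨fun k : ℕ => (k:ℤ)+1, fun x y h => by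
          simp only at h; omega⟩ by
    ext x
    simp only [Finset.mem_Icc, Finset.mem_map, Finset.mem_range, Function.Embedding.coeFn_mk]
    constructor
    · rintro ⟨h1, h2⟩; exact ⟨(x-1).toNat, by omega, by show (((x-1).toNat : ℕ) : ℤ) + 1 = x; omega⟩
    · rintro ⟨k, hk, rfl⟩; show 1 ≤ (k:ℤ)+1 ∧ (k:ℤ)+1 ≤ (n:ℤ); omega]
  rw [Finset.sum_map]
  rfl

lemma band_sum (n : ℕ) (m : ℤ) (hm1 : 1 ≤ m) (hm2 : m ≤ (n:ℤ)) (G T : ℤ → ℝ)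
    (hT : ∀ k, k ≤ 0 ∨ (n:ℤ) < k → T k = 0)
    (hG : ∀ k, k < m - 3 ∨ m + 3 < k → G k = 0) :
    ∑ k ∈ Finset.Icc (1:ℤ) (n:ℤ), G k * T k =
      G (m-3)*T (m-3) + G (m-2)*T (m-2) + G (m-1)*T (m-1) + G m*T m
        + G (m+1)*T (m+1) + G (m+2)*T (m+2) + G (m+3)*T (m+3) := by
  have h1 : ∑ k ∈ Finset.Icc (1:ℤ) (n:ℤ), G k * T k
      = ∑ k ∈ Finset.Icc (-2:ℤ) ((n:ℤ)+3), G k * T k := by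
    apply Finset.sum_subset
    · intro x hx; simp at hx ⊢; omega
    · intro x hx hnx; simp at hx hnx; rw [hT x (by omega), mul_zero]
  have h2 : ∑ k ∈ Finset.Icc (m-3) (m+3), G k * T k
      = ∑ k ∈ Finset.Icc (-2:ℤ) ((n:ℤ)+3), G k * T k := by
    apply Finset.sum_subset
    · intro x hx; simp at hx ⊢; omega
    · intro x hx hnx; simp at hx hnx; rw [hG x (by omega), zero_mul]
  rw [h1, ← h2, hepta_sum_Icc7]

set_option maxHeartbeats 2000000 in
theorem stmt_3 (n : ℕ) (hn : 4 < n) (a b c d e f g A B C : ℤ → ℝ)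
    (hg : ∀ i : ℤ, 1 ≤ i → i ≤ (n : ℤ) - 3 → g i ≠ 0)
    (hg1 : g ((n : ℤ) - 2) = 1) (hg2 : g ((n : ℤ) - 1) = 1) (hg3 : g (n : ℤ) = 1)
    (hf1 : f ((n : ℤ) - 1) = 0) (hf2 : f (n : ℤ) = 0) (he1 : e (n : ℤ) = 0)
    (hA : SevenTermRec n a b c d e f g A) (hA1 : A 1 = 0) (hA2 : A 2 = 0) (hA3 : A 3 = 1)
    (hB : SevenTermRec n a b c d e f g B) (hB1 : B 1 = 0) (hB2 : B 2 = 1) (hB3 : B 3 = 0)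
    (hC : SevenTermRec n a b c d e f g C) (hC1 : C 1 = 1) (hC2 : C 2 = 0) (hC3 : C 3 = 0) :
    (heptaMatrix n a b c d e f g).mulVec
        (fun i => det3 A B C ((i : ℤ) + 1) ((n : ℤ) + 1) ((n : ℤ) + 2)) =
      -(det3 A B C ((n : ℤ) + 3) ((n : ℤ) + 1) ((n : ℤ) + 2) • stdBasis n (n : ℤ)) := by
  obtain ⟨hA0, hArec⟩ := hA
  obtain ⟨hB0, hBrec⟩ := hB
  obtain ⟨hC0, hCrec⟩ := hC
  set W : ℤ → ℝ := fun p => det3 A B C p ((n:ℤ)+1) ((n:ℤ)+2) with hWdef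
  have hWp : ∀ p, det3 A B C p ((n:ℤ)+1) ((n:ℤ)+2) = W p := fun p => by simp [hWdef]
  have hWlin : ∀ p, W p =
      (B ((n:ℤ)+1) * C ((n:ℤ)+2) - C ((n:ℤ)+1) * B ((n:ℤ)+2)) * A p
      + (C ((n:ℤ)+1) * A ((n:ℤ)+2) - A ((n:ℤ)+1) * C ((n:ℤ)+2)) * B p
      + (A ((n:ℤ)+1) * B ((n:ℤ)+2) - B ((n:ℤ)+1) * A ((n:ℤ)+2)) * C p := by
    intro p
    simp [hWdef, det3, Matrix.det_fin_three]
    ring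
  have hW0 : ∀ j : ℤ, j ≤ 0 → W j = 0 := by
    intro j hj; rw [hWlin, hA0 j hj, hB0 j hj, hC0 j hj]; ring
  have hWrec : ∀ i : ℤ, 1 ≤ i → i ≤ (n:ℤ) →
      a i * W (i - 3) + b i * W (i - 2) + c i * W (i - 1) + d i * W i +
        e i * W (i + 1) + f i * W (i + 2) + g i * W (i + 3) = 0 := by
    intro i h1 h2
    simp only [hWlin]
    linear_combination
      (B ((n:ℤ)+1) * C ((n:ℤ)+2) - C ((n:ℤ)+1) * B ((n:ℤ)+2)) * hArec i h1 h2
      + (C ((n:ℤ)+1) * A ((n:ℤ)+2) - A ((n:ℤ)+1) * C ((n:ℤ)+2)) * hBrec i h1 h2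
      + (A ((n:ℤ)+1) * B ((n:ℤ)+2) - B ((n:ℤ)+1) * A ((n:ℤ)+2)) * hCrec i h1 h2
  have hWq : W ((n:ℤ)+1) = 0 := by
    simp [hWdef, det3, Matrix.det_fin_three]
  have hWr : W ((n:ℤ)+2) = 0 := by
    simp [hWdef, det3, Matrix.det_fin_three]
  set T : ℤ → ℝ := fun k => if 1 ≤ k ∧ k ≤ (n:ℤ) then W k else 0 with hTdef
  have hT_out : ∀ k : ℤ, k ≤ 0 ∨ (n:ℤ) < k → T k = 0 := by
    intro k hk; simp only [hTdef]; rw [if_neg (by omega)]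
  have hT_in : ∀ k : ℤ, k ≤ (n:ℤ) → T k = W k := by
    intro k hk
    by_cases h1 : 1 ≤ k
    · simp only [hTdef]; rw [if_pos ⟨h1, hk⟩]
    · simp only [hTdef]; rw [if_neg (by omega), hW0 k (by omega)]
  funext i
  have hi := i.isLt
  have hm1 : 1 ≤ (i:ℤ)+1 := by omega
  have hm2 : (i:ℤ)+1 ≤ (n:ℤ) := by omega
  have lhs_eq : (heptaMatrix n a b c d e f g).mulVec
      (fun i => det3 A B C ((i : ℤ) + 1) ((n : ℤ) + 1) ((n : ℤ) + 2)) i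
      = bandG a b c d e f g ((i:ℤ)+1) ((i:ℤ)+1-3) * T ((i:ℤ)+1-3)
        + bandG a b c d e f g ((i:ℤ)+1) ((i:ℤ)+1-2) * T ((i:ℤ)+1-2)
        + bandG a b c d e f g ((i:ℤ)+1) ((i:ℤ)+1-1) * T ((i:ℤ)+1-1)
        + bandG a b c d e f g ((i:ℤ)+1) ((i:ℤ)+1) * T ((i:ℤ)+1)
        + bandG a b c d e f g ((i:ℤ)+1) ((i:ℤ)+1+1) * T ((i:ℤ)+1+1)
        + bandG a b c d e f g ((i:ℤ)+1) ((i:ℤ)+1+2) * T ((i:ℤ)+1+2)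
        + bandG a b c d e f g ((i:ℤ)+1) ((i:ℤ)+1+3) * T ((i:ℤ)+1+3) := by
    have e0 : (heptaMatrix n a b c d e f g).mulVec
        (fun i => det3 A B C ((i : ℤ) + 1) ((n : ℤ) + 1) ((n : ℤ) + 2)) i
        = ∑ j : Fin n, bandG a b c d e f g ((i:ℤ)+1) ((j:ℤ)+1) * T ((j:ℤ)+1) := by
      show ∑ j : Fin n, heptaMatrix n a b c d e f g i j
          * det3 A B C ((j : ℤ) + 1) ((n : ℤ) + 1) ((n : ℤ) + 2) = _
      apply Finset.sum_congr rfl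
      intro j _
      have hj := j.isLt
      rw [hepta_eq_bandG, hWp, hT_in ((j:ℤ)+1) (by omega)]
    rw [e0]
    exact (sum_fin_eq_sum_Icc n fun k => bandG a b c d e f g ((i:ℤ)+1) k * T k).trans
      (band_sum n ((i:ℤ)+1) hm1 hm2 _ _ hT_out (bandG_zero a b c d e f g ((i:ℤ)+1)))
  rw [lhs_eq]
  have eG1 : bandG a b c d e f g ((i:ℤ)+1) ((i:ℤ)+1-3) = a ((i:ℤ)+1) := by
    unfold bandG; split_ifs <;> first | rfl | omega
  have eG2 : bandG a b c d e f g ((i:ℤ)+1) ((i:ℤ)+1-2) = b ((i:ℤ)+1) := by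
    unfold bandG; split_ifs <;> first | rfl | omega
  have eG3 : bandG a b c d e f g ((i:ℤ)+1) ((i:ℤ)+1-1) = c ((i:ℤ)+1) := by
    unfold bandG; split_ifs <;> first | rfl | omega
  have eG4 : bandG a b c d e f g ((i:ℤ)+1) ((i:ℤ)+1) = d ((i:ℤ)+1) := by
    unfold bandG; split_ifs <;> first | rfl | omega
  have eG5 : bandG a b c d e f g ((i:ℤ)+1) ((i:ℤ)+1+1) = e ((i:ℤ)+1) := by
    unfold bandG; split_ifs <;> first | rfl | omega
  have eG6 : bandG a b c d e f g ((i:ℤ)+1) ((i:ℤ)+1+2) = f ((i:ℤ)+1) := by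
    unfold bandG; split_ifs <;> first | rfl | omega
  have eG7 : bandG a b c d e f g ((i:ℤ)+1) ((i:ℤ)+1+3) = g ((i:ℤ)+1) := by
    unfold bandG; split_ifs <;> first | rfl | omega
  rw [eG1, eG2, eG3, eG4, eG5, eG6, eG7]
  have hrec := hWrec ((i:ℤ)+1) hm1 hm2
  simp only [Pi.neg_apply, Pi.smul_apply, smul_eq_mul, _root_.stdBasis, hWp]
  rcases (by omega : (i:ℤ)+1 ≤ (n:ℤ)-3 ∨ (i:ℤ)+1 = (n:ℤ)-2 ∨ (i:ℤ)+1 = (n:ℤ)-1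
      ∨ (i:ℤ)+1 = (n:ℤ)) with h | h | h | h
  · rw [hT_in _ (by omega), hT_in _ (by omega), hT_in _ (by omega), hT_in _ (by omega),
      hT_in _ (by omega), hT_in _ (by omega), hT_in _ (by omega), if_neg (by omega)]
    linear_combination hrec
  · rw [hT_in _ (by omega), hT_in _ (by omega), hT_in _ (by omega), hT_in _ (by omega),
      hT_in _ (by omega), hT_in _ (by omega), hT_out _ (by omega), if_neg (by omega)]
    have h1 : W ((i:ℤ)+1+3) = 0 := by rw [show (i:ℤ)+1+3 = (n:ℤ)+1 by omega]; exact hWq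
    linear_combination hrec - g ((i:ℤ)+1) * h1
  · rw [hT_in _ (by omega), hT_in _ (by omega), hT_in _ (by omega), hT_in _ (by omega),
      hT_in _ (by omega), hT_out _ (by omega), hT_out _ (by omega), if_neg (by omega)]
    have h1 : W ((i:ℤ)+1+2) = 0 := by rw [show (i:ℤ)+1+2 = (n:ℤ)+1 by omega]; exact hWq
    have h2 : W ((i:ℤ)+1+3) = 0 := by rw [show (i:ℤ)+1+3 = (n:ℤ)+2 by omega]; exact hWr
    linear_combination hrec - f ((i:ℤ)+1) * h1 - g ((i:ℤ)+1) * h2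
  · rw [hT_in _ (by omega), hT_in _ (by omega), hT_in _ (by omega), hT_in _ (by omega),
      hT_out _ (by omega), hT_out _ (by omega), hT_out _ (by omega), if_pos h]
    rw [h] at hrec ⊢
    linear_combination hrec - W ((n:ℤ)+1) * he1 - W ((n:ℤ)+2) * hf2 - W ((n:ℤ)+3) * hg3
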